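/- arXiv:2106.15869 — 4 statements merged into one kernel-verified Lean document; each statement's English description precedes it below -/
import Mathlib

section
/- For a, b ∈ ℝ, δ > 0, f > 0, the Godunov upwind equation ((u-a)⁺/δ)² + ((u-b)⁺/δ)² = 1/f² has a unique solution u with u > min(a,b). -/
private lemma godunov_aux (a b δ f : ℝ) (hδ : 0 < δ) (hf : 0 < f) (hab : a ≤ b) :
    ∃! u : ℝ, u > min a b ∧
      (max (u - a) 0 / δ) ^ 2 + (max (u - b) 0 / δ) ^ 2 = 1 / f ^ 2 := by
  rw [min_eq_left hab]
  set h : ℝ → ℝ := fun u => (max (u - a) 0 / δ) ^ 2 + (max (u - b) 0 / δ) ^ 2 with hh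
  have hc : Continuous h := by fun_prop
  have hmono : StrictMonoOn h (Set.Ici a) := by
    intro u hu v hv huv
    simp only [Set.mem_Ici] at hu hv
    have h1 : (max (u - a) 0 / δ) ^ 2 < (max (v - a) 0 / δ) ^ 2 := by
      rw [max_eq_left (by linarith : (0:ℝ) ≤ u - a),
          max_eq_left (by linarith : (0:ℝ) ≤ v - a)]
      have hlt : (u - a) / δ < (v - a) / δ := by gcongr
      exact pow_lt_pow_left₀ hlt (div_nonneg (by linarith) hδ.le) (by norm_num)
    have h2 : (max (u - b) 0 / δ) ^ 2 ≤ (max (v - b) 0 / δ) ^ 2 := by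
      have hle : max (u - b) 0 ≤ max (v - b) 0 := max_le_max (by linarith) le_rfl
      gcongr
    exact add_lt_add_of_lt_of_le h1 h2
  have h0 : h a = 0 := by
    simp [hh, max_eq_right (sub_nonpos.mpr hab)]
  have hdf : 0 < δ / f := by positivity
  have hbig : 1 / f ^ 2 ≤ h (a + δ / f) := by
    have e1 : max (a + δ / f - a) 0 = δ / f := by
      rw [show a + δ / f - a = δ / f by ring, max_eq_left hdf.le]
    have : (max (a + δ / f - a) 0 / δ) ^ 2 = 1 / f ^ 2 := by
      rw [e1]; field_simp
    simp only [hh]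
    nlinarith [sq_nonneg (max (a + δ / f - b) 0 / δ)]
  obtain ⟨u, hu, hhu⟩ := intermediate_value_Icc (by linarith : a ≤ a + δ / f)
    hc.continuousOn (by rw [h0]; exact ⟨by positivity, hbig⟩)
  have hua : a < u := by
    rcases lt_or_eq_of_le hu.1 with h' | h'
    · exact h'
    · exfalso
      rw [← h'] at hhu
      rw [h0] at hhu
      have : (0:ℝ) < 1 / f ^ 2 := by positivity
      linarith
  refine ⟨u, ⟨hua, hhu⟩, ?_⟩
  rintro v ⟨hv1, hv2⟩
  exact hmono.injOn hv1.le hua.le (hv2.trans hhu.symm)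

/-- Existence and uniqueness of the solution of the 2D Godunov upwind equation
exceeding the smaller neighbor value. -/
theorem stmt_3 (a b δ f : ℝ) (hδ : 0 < δ) (hf : 0 < f) :
    ∃! u : ℝ, u > min a b ∧
      (max (u - a) 0 / δ) ^ 2 + (max (u - b) 0 / δ) ^ 2 = 1 / f ^ 2 := by
  rcases le_total a b with hab | hba
  · exact godunov_aux a b δ f hδ hf hab
  · obtain ⟨u, ⟨h1, h2⟩, h3⟩ := godunov_aux b a δ f hδ hf hba
    refine ⟨u, ⟨by rwa [min_comm], by rw [add_comm]; exact h2⟩, ?_⟩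
    rintro v ⟨hv1, hv2⟩
    exact h3 v ⟨by rwa [min_comm] at hv1, by rw [add_comm]; exact hv2⟩
end

section
/- The solution u(a,b) of the 2D Godunov upwind equation ((u-a)⁺)² + ((u-b)⁺)² = δ²/f² (with u > min(a,b)) is monotone nondecreasing in each of the neighbor values a and b. -/
/-- Monotonicity of the 2D Godunov local solver in the neighbor values. -/
theorem stmt_4 (δ f : ℝ) (hδ : 0 < δ) (hf : 0 < f)
    (a₁ b₁ a₂ b₂ u₁ u₂ : ℝ) (ha : a₁ ≤ a₂) (hb : b₁ ≤ b₂)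
    (hu₁ : u₁ > min a₁ b₁ ∧
      (max (u₁ - a₁) 0) ^ 2 + (max (u₁ - b₁) 0) ^ 2 = δ ^ 2 / f ^ 2)
    (hu₂ : u₂ > min a₂ b₂ ∧
      (max (u₂ - a₂) 0) ^ 2 + (max (u₂ - b₂) 0) ^ 2 = δ ^ 2 / f ^ 2) :
    u₁ ≤ u₂ := by
  by_contra h
  push_neg at h
  obtain ⟨hm₁, he₁⟩ := hu₁
  obtain ⟨hm₂, he₂⟩ := hu₂
  have hpos : 0 < δ ^ 2 / f ^ 2 := by positivity
  have hA : max (u₂ - a₂) 0 ≤ max (u₁ - a₁) 0 :=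
    max_le_max (by linarith) le_rfl
  have hB : max (u₂ - b₂) 0 ≤ max (u₁ - b₁) 0 :=
    max_le_max (by linarith) le_rfl
  have hA0 : (0:ℝ) ≤ max (u₂ - a₂) 0 := le_max_right _ _
  have hB0 : (0:ℝ) ≤ max (u₂ - b₂) 0 := le_max_right _ _
  have hor : 0 < max (u₂ - a₂) 0 ∨ 0 < max (u₂ - b₂) 0 := by
    by_contra hc
    push_neg at hc
    have h1 : max (u₂ - a₂) 0 = 0 := le_antisymm hc.1 hA0
    have h2 : max (u₂ - b₂) 0 = 0 := le_antisymm hc.2 hB0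
    rw [h1, h2] at he₂
    simp at he₂
    linarith
  rcases hor with hp | hp
  · have h0 : (0:ℝ) ≤ u₂ - a₂ := by
      by_contra hc
      push_neg at hc
      rw [max_eq_right hc.le] at hp
      exact lt_irrefl _ hp
    have h1 : max (u₂ - a₂) 0 = u₂ - a₂ := max_eq_left h0
    have h2 : u₂ - a₂ < u₁ - a₁ := by linarith
    have h3 : max (u₂ - a₂) 0 < max (u₁ - a₁) 0 := by
      rw [h1]; exact lt_of_lt_of_le h2 (le_max_left _ _)
    nlinarith [sq_nonneg (max (u₂ - b₂) 0), sq_nonneg (max (u₁ - b₁) 0)]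
  · have h0 : (0:ℝ) ≤ u₂ - b₂ := by
      by_contra hc
      push_neg at hc
      rw [max_eq_right hc.le] at hp
      exact lt_irrefl _ hp
    have h1 : max (u₂ - b₂) 0 = u₂ - b₂ := max_eq_left h0
    have h2 : u₂ - b₂ < u₁ - b₁ := by linarith
    have h3 : max (u₂ - b₂) 0 < max (u₁ - b₁) 0 := by
      rw [h1]; exact lt_of_lt_of_le h2 (le_max_left _ _)
    nlinarith
end

section
/- The 2D Godunov local solver u(a,b) is a contraction with respect to simultaneous shifts: u(a + c, b + c) = u(a,b) + c for any c ∈ ℝ, and |u(a₁,b₁) - u(a₂,b₂)| ≤ max(|a₁-a₂|, |b₁-b₂|). -/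
/-- Strict monotonicity of the Godunov operator above `min a b`. -/
lemma godunov_mono (a b u v : ℝ) (hv : min a b < v) (huv : u < v) :
    (max (u - a) 0) ^ 2 + (max (u - b) 0) ^ 2
      < (max (v - a) 0) ^ 2 + (max (v - b) 0) ^ 2 := by
  have hle : ∀ x y : ℝ, x ≤ y → (max x 0) ^ 2 ≤ (max y 0) ^ 2 := by
    intro x y hxy
    have h0 : (0:ℝ) ≤ max x 0 := le_max_right _ _
    exact pow_le_pow_left₀ h0 (max_le_max hxy le_rfl) 2
  have hlt : ∀ x y : ℝ, x < y → 0 < y → (max x 0) ^ 2 < (max y 0) ^ 2 := by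
    intro x y hxy hy
    have h0 : (0:ℝ) ≤ max x 0 := le_max_right _ _
    have : max x 0 < max y 0 := by
      rw [max_eq_left hy.le]
      exact max_lt hxy hy
    exact pow_lt_pow_left₀ this h0 (by norm_num)
  rcases le_total a b with hab | hab
  · have hva : 0 < v - a := by
      have := min_eq_left hab ▸ hv; linarith
    exact add_lt_add_of_lt_of_le (hlt _ _ (by linarith) hva) (hle _ _ (by linarith))
  · have hvb : 0 < v - b := by
      have := min_eq_right hab ▸ hv; linarith
    exact add_lt_add_of_le_of_lt (hle _ _ (by linarith)) (hlt _ _ (by linarith) hvb)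

/-- One-sided contraction estimate. -/
lemma godunov_side (a₁ b₁ a₂ b₂ u₁ u₂ K M : ℝ)
    (h2 : min a₂ b₂ < u₂)
    (e1 : (max (u₁ - a₁) 0) ^ 2 + (max (u₁ - b₁) 0) ^ 2 = K)
    (e2 : (max (u₂ - a₂) 0) ^ 2 + (max (u₂ - b₂) 0) ^ 2 = K)
    (ha : a₁ ≤ a₂ + M) (hb : b₁ ≤ b₂ + M) : u₁ ≤ u₂ + M := by
  by_contra h
  push_neg at h
  set w := u₁ - M with hw
  have hwu : u₂ < w := by simp [hw]; linarith
  have hmono := godunov_mono a₂ b₂ u₂ w (lt_trans h2 hwu) hwu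
  have hle : ∀ x y : ℝ, x ≤ y → (max x 0) ^ 2 ≤ (max y 0) ^ 2 := by
    intro x y hxy
    exact pow_le_pow_left₀ (le_max_right _ _) (max_le_max hxy le_rfl) 2
  have hW : (max (w - a₂) 0) ^ 2 + (max (w - b₂) 0) ^ 2 ≤ K := by
    calc (max (w - a₂) 0) ^ 2 + (max (w - b₂) 0) ^ 2
        ≤ (max (u₁ - a₁) 0) ^ 2 + (max (u₁ - b₁) 0) ^ 2 :=
          add_le_add (hle _ _ (by simp [hw]; linarith)) (hle _ _ (by simp [hw]; linarith))
      _ = K := e1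
  linarith [e2 ▸ hmono]

/-- The 2D Godunov local solver commutes with simultaneous shifts and is a
contraction in the sup-norm of the neighbor values. -/
theorem stmt_6 (δ f : ℝ) (hδ : 0 < δ) (hf : 0 < f) :
    (∀ a b c u u' : ℝ,
      (u > min a b ∧ (max (u - a) 0) ^ 2 + (max (u - b) 0) ^ 2 = δ ^ 2 / f ^ 2) →
      (u' > min (a + c) (b + c) ∧
        (max (u' - (a + c)) 0) ^ 2 + (max (u' - (b + c)) 0) ^ 2 = δ ^ 2 / f ^ 2) →
      u' = u + c) ∧
    (∀ a₁ b₁ a₂ b₂ u₁ u₂ : ℝ,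
      (u₁ > min a₁ b₁ ∧
        (max (u₁ - a₁) 0) ^ 2 + (max (u₁ - b₁) 0) ^ 2 = δ ^ 2 / f ^ 2) →
      (u₂ > min a₂ b₂ ∧
        (max (u₂ - a₂) 0) ^ 2 + (max (u₂ - b₂) 0) ^ 2 = δ ^ 2 / f ^ 2) →
      |u₁ - u₂| ≤ max |a₁ - a₂| |b₁ - b₂|) := by
  constructor
  · rintro a b c u u' ⟨hu, eu⟩ ⟨hu', eu'⟩
    -- u + c also solves the shifted equation; use strict monotonicity for uniqueness
    have hmin : min (a + c) (b + c) < u + c := by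
      have : min (a + c) (b + c) = min a b + c := by
        rcases le_total a b with h | h <;> simp [min_eq_left, min_eq_right, h]
      rw [this]; linarith [hu]
    have euc : (max (u + c - (a + c)) 0) ^ 2 + (max (u + c - (b + c)) 0) ^ 2
        = δ ^ 2 / f ^ 2 := by
      have h1 : u + c - (a + c) = u - a := by ring
      have h2 : u + c - (b + c) = u - b := by ring
      rw [h1, h2]; exact eu
    rcases lt_trichotomy u' (u + c) with h | h | h
    · have := godunov_mono (a + c) (b + c) u' (u + c) hmin h
      rw [eu', euc] at this; linarith
    · exact h
    · have := godunov_mono (a + c) (b + c) (u + c) u' hu' h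
      rw [eu', euc] at this; linarith
  · rintro a₁ b₁ a₂ b₂ u₁ u₂ ⟨h1, e1⟩ ⟨h2, e2⟩
    set M := max |a₁ - a₂| |b₁ - b₂| with hM
    rw [abs_sub_le_iff]
    constructor
    · have := godunov_side a₁ b₁ a₂ b₂ u₁ u₂ (δ ^ 2 / f ^ 2) M h2 e1 e2
        (by have := abs_sub_le_iff.mp (le_max_left |a₁ - a₂| |b₁ - b₂|); linarith [this.1])
        (by have := abs_sub_le_iff.mp (le_max_right |a₁ - a₂| |b₁ - b₂|); linarith [this.1])
      linarith
    · have := godunov_side a₂ b₂ a₁ b₁ u₂ u₁ (δ ^ 2 / f ^ 2) M h1 e2 e1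
        (by have := abs_sub_le_iff.mp (le_max_left |a₁ - a₂| |b₁ - b₂|); linarith [this.2])
        (by have := abs_sub_le_iff.mp (le_max_right |a₁ - a₂| |b₁ - b₂|); linarith [this.2])
      linarith
end

section
/- For any sorted neighbor values a₁ ≤ a₂ ≤ a₃, δ > 0, f > 0, the equation ((u-a₁)⁺)² + ((u-a₂)⁺)² + ((u-a₃)⁺)² = δ²/f² has a unique solution u with u > a₁, and it satisfies a₁ < u ≤ a₁ + δ/f. -/
/-- Existence, uniqueness and bounds for the 3D Godunov upwind local solver. -/
theorem stmt_13 (a₁ a₂ a₃ δ f : ℝ) (h12 : a₁ ≤ a₂) (h23 : a₂ ≤ a₃)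
    (hδ : 0 < δ) (hf : 0 < f) :
    (∃! u : ℝ, u > a₁ ∧
      (max (u - a₁) 0) ^ 2 + (max (u - a₂) 0) ^ 2 + (max (u - a₃) 0) ^ 2
        = δ ^ 2 / f ^ 2) ∧
    (∀ u : ℝ, u > a₁ →
      (max (u - a₁) 0) ^ 2 + (max (u - a₂) 0) ^ 2 + (max (u - a₃) 0) ^ 2
        = δ ^ 2 / f ^ 2 → a₁ < u ∧ u ≤ a₁ + δ / f) := by
  set c : ℝ := δ ^ 2 / f ^ 2 with hc
  have hcpos : 0 < c := by positivity
  set g : ℝ → ℝ := fun u =>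
    (max (u - a₁) 0) ^ 2 + (max (u - a₂) 0) ^ 2 + (max (u - a₃) 0) ^ 2 with hg
  -- strict monotonicity on u > a₁
  have hmono : ∀ x y : ℝ, a₁ < x → x < y → g x < g y := by
    intro x y hx hxy
    have h1 : (max (x - a₁) 0) ^ 2 < (max (y - a₁) 0) ^ 2 := by
      rw [max_eq_left (by linarith), max_eq_left (by linarith)]
      apply pow_lt_pow_left₀ (by linarith) (by linarith) (by norm_num)
    have h2 : (max (x - a₂) 0) ^ 2 ≤ (max (y - a₂) 0) ^ 2 := by
      apply pow_le_pow_left₀ (le_max_right _ _)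
      exact max_le_max (by linarith) le_rfl
    have h3 : (max (x - a₃) 0) ^ 2 ≤ (max (y - a₃) 0) ^ 2 := by
      apply pow_le_pow_left₀ (le_max_right _ _)
      exact max_le_max (by linarith) le_rfl
    simp only [hg]
    linarith
  -- bounds
  have hbound : ∀ u : ℝ, u > a₁ → g u = c → a₁ < u ∧ u ≤ a₁ + δ / f := by
    intro u hu heq
    refine ⟨hu, ?_⟩
    have h2 : 0 ≤ (max (u - a₂) 0) ^ 2 := by positivity
    have h3 : 0 ≤ (max (u - a₃) 0) ^ 2 := by positivity
    have h1 : (u - a₁) ^ 2 ≤ c := by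
      have := heq
      simp only [hg] at this
      rw [max_eq_left (by linarith)] at this
      linarith
    have hdf : c = (δ / f) ^ 2 := by rw [hc, div_pow]
    rw [hdf] at h1
    have : u - a₁ ≤ δ / f := by
      have := (pow_le_pow_iff_left₀ (by linarith) (by positivity) (two_ne_zero)).mp h1
      exact this
    linarith
  constructor
  · -- existence and uniqueness
    -- existence via IVT on [a₁, a₁ + δ/f]
    have hcont : ContinuousOn g (Set.Icc a₁ (a₁ + δ / f)) := by
      apply Continuous.continuousOn
      fun_prop
    have hab : a₁ ≤ a₁ + δ / f := by
      have : 0 < δ / f := by positivity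
      linarith
    have hga : g a₁ = 0 := by
      simp only [hg]
      rw [max_eq_right (by linarith), max_eq_right (by linarith),
        max_eq_right (by linarith)]
      ring
    have hgb : c ≤ g (a₁ + δ / f) := by
      simp only [hg]
      have h1 : (max (a₁ + δ / f - a₁) 0) ^ 2 = c := by
        have he : a₁ + δ / f - a₁ = δ / f := by ring
        rw [max_eq_left (by rw [he]; positivity), he, hc, div_pow]
      have h2 : 0 ≤ (max (a₁ + δ / f - a₂) 0) ^ 2 := by positivity
      have h3 : 0 ≤ (max (a₁ + δ / f - a₃) 0) ^ 2 := by positivity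
      linarith
    have hmem : c ∈ Set.Icc (g a₁) (g (a₁ + δ / f)) := ⟨by rw [hga]; exact hcpos.le, hgb⟩
    obtain ⟨u, hu, hgu⟩ := intermediate_value_Icc hab hcont hmem
    have hua : a₁ < u := by
      rcases lt_or_eq_of_le hu.1 with h | h
      · exact h
      · exfalso; rw [← h, hga] at hgu; exact hcpos.ne hgu
    refine ⟨u, ⟨hua, hgu⟩, ?_⟩
    intro v ⟨hv, hgv'⟩
    have hgv : g v = c := hgv'
    by_contra hne
    rcases lt_or_gt_of_ne hne with h | h
    · have := hmono v u hv h
      rw [hgv, hgu] at this; exact lt_irrefl _ this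
    · have := hmono u v hua h
      rw [hgv, hgu] at this; exact lt_irrefl _ this
  · exact hbound
end
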